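/- (Adequacy of CPL+e with respect to swap structures.) For every set Γ ∪ {φ} of formulas over the signature Σ = {∧, ∨, →, ¬, ∘}: Γ ⊢_{CPL+e} φ if and only if Γ ⊨_{Mat(K_{CPL+e})} φ, i.e. for every swap structure B for CPL+e over a Boolean algebra and every valuation v over the Nmatrix M(B) with v[Γ] ⊆ D_B, it holds that v(φ) ∈ D_B. -/

import Mathlib

universe u v w u₂

/-- A multialgebra (hyperalgebra, non-deterministic algebra) over a signature `σ`,
where `σ n` is the set of `n`-ary operator symbols: each operator is interpreted as a
multioperation taking values in the nonempty subsets of the (nonempty) support. -/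
structure MultiAlg (σ : ℕ → Type v) : Type (max (u + 1) v) where
  carrier : Type u
  nonempty : Nonempty carrier
  op : ∀ {n : ℕ}, σ n → (Fin n → carrier) → Set carrier
  op_nonempty : ∀ {n : ℕ} (c : σ n) (a : Fin n → carrier), (op c a).Nonempty

namespace MultiAlg

variable {σ : ℕ → Type v}

/-- Homomorphism of multialgebras: `f[c^A(ā)] ⊆ c^B(f ∘ ā)`. -/
def IsHom (A : MultiAlg.{u} σ) (B : MultiAlg.{u₂} σ) (f : A.carrier → B.carrier) : Prop :=
  ∀ {n : ℕ} (c : σ n) (a : Fin n → A.carrier), f '' A.op c a ⊆ B.op c (f ∘ a)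

/-- Full homomorphism of multialgebras: `f[c^A(ā)] = c^B(f ∘ ā)`. -/
def IsFullHom (A : MultiAlg.{u} σ) (B : MultiAlg.{u₂} σ) (f : A.carrier → B.carrier) : Prop :=
  ∀ {n : ℕ} (c : σ n) (a : Fin n → A.carrier), f '' A.op c a = B.op c (f ∘ a)

/-- Isomorphism in the category `MAlg(σ)`: a homomorphism with a two-sided
inverse homomorphism. -/
def IsIso (A : MultiAlg.{u} σ) (B : MultiAlg.{u₂} σ) (f : A.carrier → B.carrier) : Prop :=
  IsHom A B f ∧ ∃ g : B.carrier → A.carrier,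
    IsHom B A g ∧ Function.LeftInverse g f ∧ Function.RightInverse g f

/-- Monomorphism in the category `MAlg(σ)`: a homomorphism which is
left-cancellable with respect to homomorphisms. -/
def IsMono (A : MultiAlg.{u} σ) (B : MultiAlg.{u₂} σ) (f : A.carrier → B.carrier) : Prop :=
  IsHom A B f ∧ ∀ (C : MultiAlg.{w} σ) (g h : C.carrier → A.carrier),
    IsHom C A g → IsHom C A h → f ∘ g = f ∘ h → g = h

/-- Epimorphism in the category `MAlg(σ)`: a homomorphism which is
right-cancellable with respect to homomorphisms. -/
def IsEpi (A : MultiAlg.{u} σ) (B : MultiAlg.{u₂} σ) (f : A.carrier → B.carrier) : Prop :=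
  IsHom A B f ∧ ∀ (C : MultiAlg.{w} σ) (g h : B.carrier → C.carrier),
    IsHom B C g → IsHom B C h → g ∘ f = h ∘ f → g = h

/-- The product of a family of multialgebras. -/
def pi {I : Type w} (F : I → MultiAlg.{u} σ) : MultiAlg.{max u w} σ where
  carrier := ∀ i, (F i).carrier
  nonempty := ⟨fun i => Classical.choice (F i).nonempty⟩
  op := fun {n} c a => {x | ∀ i, x i ∈ (F i).op c fun k => a k i}
  op_nonempty := fun {n} c a =>
    ⟨fun i => ((F i).op_nonempty c fun k => a k i).choose,
      fun i => ((F i).op_nonempty c fun k => a k i).choose_spec⟩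

/-- The one-element multialgebra. -/
def one (σ : ℕ → Type v) : MultiAlg.{u} σ where
  carrier := PUnit
  nonempty := ⟨PUnit.unit⟩
  op := fun _ _ => {PUnit.unit}
  op_nonempty := fun _ _ => ⟨PUnit.unit, rfl⟩

/-- The direct image of a function between (the supports of) two multialgebras,
as a submultialgebra of the codomain:
`c^{f(A)}(b̄) = ⋃ { f[c^A(ā)] : ā ∈ f⁻¹(b̄) }`. -/
def dirIm (A : MultiAlg.{u} σ) (B : MultiAlg.{u₂} σ) (f : A.carrier → B.carrier) :
    MultiAlg.{u₂} σ where
  carrier := ↥(Set.range f)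
  nonempty := ⟨⟨f (Classical.choice A.nonempty), Set.mem_range_self _⟩⟩
  op := fun {n} c b => {y | ∃ a : Fin n → A.carrier,
    (∀ i, f (a i) = (b i : B.carrier)) ∧ (y : B.carrier) ∈ f '' A.op c a}
  op_nonempty := by
    intro n c b
    choose a ha using fun i => (b i).2
    obtain ⟨x, hx⟩ := A.op_nonempty c a
    exact ⟨⟨f x, Set.mem_range_self x⟩, a, ha, x, hx, rfl⟩

/-- The corestriction `f̄ : A → f(A)` of `f` to the direct image. -/
def corestrict (A : MultiAlg.{u} σ) (B : MultiAlg.{u₂} σ) (f : A.carrier → B.carrier) :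
    A.carrier → (dirIm A B f).carrier :=
  fun x => ⟨f x, Set.mem_range_self x⟩

/-- The inclusion `g : f(A) → B` of the direct image in the codomain. -/
def dirImIncl (A : MultiAlg.{u} σ) (B : MultiAlg.{u₂} σ) (f : A.carrier → B.carrier) :
    (dirIm A B f).carrier → B.carrier :=
  fun y => y.val

/-- A multicongruence over a multialgebra. -/
structure IsMulticongruence (A : MultiAlg.{u} σ) (r : A.carrier → A.carrier → Prop) : Prop where
  equivalence : Equivalence r
  compat : ∀ {n : ℕ} (c : σ n) (a b : Fin n → A.carrier), (∀ i, r (a i) (b i)) →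
    ∀ x ∈ A.op c a, ∃ y ∈ A.op c b, r x y
  const : ∀ (c : σ 0) (a : Fin 0 → A.carrier) (x y : A.carrier),
    x ∈ A.op c a → y ∈ A.op c a → r x y

/-- The quotient multialgebra of `A` modulo a relation `r`:
`c^{A/Θ}(a₁/Θ, …, aₙ/Θ) = { a/Θ : a ∈ c^A(ā) }` (taking the union over all
representatives, which is irrelevant when `r` is a multicongruence). -/
def quotAlg (A : MultiAlg.{u} σ) (r : A.carrier → A.carrier → Prop) : MultiAlg.{u} σ where
  carrier := Quot r
  nonempty := A.nonempty.map (Quot.mk r)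
  op := fun {n} c q => {y | ∃ a : Fin n → A.carrier,
    (∀ i, Quot.mk r (a i) = q i) ∧ ∃ x ∈ A.op c a, y = Quot.mk r x}
  op_nonempty := by
    intro n c q
    choose a ha using fun i => Quot.exists_rep (q i)
    obtain ⟨x, hx⟩ := A.op_nonempty c a
    exact ⟨Quot.mk r x, a, ha, x, hx, rfl⟩

end MultiAlg



/-- The signature `Σ = {∧, ∨, →, ¬, ∘}` of the logic mbC. -/
inductive SwapSig : ℕ → Type
  | and : SwapSig 2
  | or : SwapSig 2
  | imp : SwapSig 2
  | neg : SwapSig 1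
  | circ : SwapSig 1

/-- The constraint on the first coordinate of the output of each multioperation
of a swap structure (computed in the underlying Boolean algebra). -/
def swapTgt {A : Type u} [BooleanAlgebra A] :
    ∀ {n : ℕ}, SwapSig n → (Fin n → A × A × A) → A
  | _, .and, a => (a 0).1 ⊓ (a 1).1
  | _, .or, a => (a 0).1 ⊔ (a 1).1
  | _, .imp, a => (a 0).1 ⇨ (a 1).1
  | _, .neg, a => (a 0).2.1
  | _, .circ, a => (a 0).2.2

/-- A swap structure for CPL⁺ₑ over a Boolean algebra `A`: a multialgebra over the
signature `{∧, ∨, →, ¬, ∘}` whose domain is a set of triples (snapshots) in `A³`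
containing some snapshot with first coordinate `0`, and whose (nonempty-valued)
multioperations satisfy
`∅ ≠ z # w ⊆ {u ∈ dom | u₁ = z₁ # w₁}` (for `# ∈ {∧,∨,→}`),
`∅ ≠ ¬z ⊆ {u ∈ dom | u₁ = z₂}` and `∅ ≠ ∘z ⊆ {u ∈ dom | u₁ = z₃}`. -/
structure SwapStr (A : Type u) [BooleanAlgebra A] : Type u where
  dom : Set (A × A × A)
  op : ∀ {n : ℕ}, SwapSig n → (Fin n → A × A × A) → Set (A × A × A)
  fst_zero : ∃ z ∈ dom, z.1 = ⊥
  op_nonempty : ∀ {n : ℕ} (c : SwapSig n) (a : Fin n → A × A × A),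
    (∀ i, a i ∈ dom) → (op c a).Nonempty
  op_sub : ∀ {n : ℕ} (c : SwapSig n) (a : Fin n → A × A × A), (∀ i, a i ∈ dom) →
    op c a ⊆ {u ∈ dom | u.1 = swapTgt c a}



namespace SwapStr

variable {A : Type u} [BooleanAlgebra A]

/-- The multialgebra over the signature `{∧, ∨, →, ¬, ∘}` underlying a swap structure. -/
def toMultiAlg (S : SwapStr A) : MultiAlg SwapSig where
  carrier := ↥S.dom
  nonempty := by
    obtain ⟨z, hz, -⟩ := S.fst_zero
    exact ⟨⟨z, hz⟩⟩
  op := fun {n} c a => {u : ↥S.dom | (u : A × A × A) ∈ S.op c fun i => (a i : A × A × A)}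
  op_nonempty := by
    intro n c a
    obtain ⟨x, hx⟩ := S.op_nonempty c (fun i => (a i : A × A × A)) fun i => (a i).2
    exact ⟨⟨x, (S.op_sub c _ (fun i => (a i).2) hx).1⟩, hx⟩

end SwapStr

/-- The universe of swap structures for mbC over `A`:
`B_A^{mbC} = {z ∈ A³ : z₁ ∨ z₂ = 1 and z₁ ∧ z₂ ∧ z₃ = 0}`. -/
def BmbcSet (A : Type u) [BooleanAlgebra A] : Set (A × A × A) :=
  {z | z.1 ⊔ z.2.1 = ⊤ ∧ z.1 ⊓ z.2.1 ⊓ z.2.2 = ⊥}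

/-- The universe of swap structures for mbCciw over `A`:
`B_A^{ciw} = {z ∈ B_A^{mbC} : z₃ ∨ (z₁ ∧ z₂) = 1}`. -/
def BciwSet (A : Type u) [BooleanAlgebra A] : Set (A × A × A) :=
  {z | z ∈ BmbcSet A ∧ z.2.2 ⊔ (z.1 ⊓ z.2.1) = ⊤}

/-- The full swap structure for mbC over `A`, with domain `B_A^{mbC}` and maximal
multioperations. -/
def fullMbc (A : Type u) [BooleanAlgebra A] : SwapStr A where
  dom := BmbcSet A
  op := fun {n} c a => {u ∈ BmbcSet A | u.1 = swapTgt c a}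
  fst_zero := ⟨(⊥, ⊤, ⊤), ⟨by simp, by simp⟩, rfl⟩
  op_nonempty := fun {n} c a _ =>
    ⟨(swapTgt c a, (swapTgt c a)ᶜ, ⊤), ⟨by simp, by simp⟩, rfl⟩
  op_sub := fun {n} c a _ => Set.Subset.refl _

/-- The full swap structure for CPL⁺ₑ over `A`, with domain `A³` and maximal
multioperations. -/
def fullCPLe (A : Type u) [BooleanAlgebra A] : SwapStr A where
  dom := Set.univ
  op := fun {n} c a => {u | u.1 = swapTgt c a}
  fst_zero := ⟨(⊥, ⊥, ⊥), trivial, rfl⟩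
  op_nonempty := fun {n} c a _ => ⟨(swapTgt c a, ⊥, ⊥), rfl⟩
  op_sub := fun {n} c a _ u hu => ⟨trivial, hu⟩

/-- The map `f⋆(z) = (f(z₁), f(z₂), f(z₃))` induced on full swap structures for mbC
by a Boolean algebra homomorphism `f`. -/
def mapMbc {A : Type u} {A' : Type u₂} [BooleanAlgebra A] [BooleanAlgebra A']
    (f : BoundedLatticeHom A A') (z : ↥(BmbcSet A)) : ↥(BmbcSet A') :=
  ⟨(f z.1.1, f z.1.2.1, f z.1.2.2), by
    obtain ⟨h1, h2⟩ := z.2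
    constructor
    · rw [← map_sup, h1, map_top]
    · rw [← map_inf, ← map_inf, h2, map_bot]⟩

/-- A bundled swap structure for mbC (an object of the category `SW_mbC`). -/
structure MbcSwap : Type (u + 1) where
  base : Type u
  [ba : BooleanAlgebra base]
  str : SwapStr base
  mbc : str.dom ⊆ BmbcSet base

attribute [instance] MbcSwap.ba

/-- Formulas of the logic mbC over the signature `Σ = {∧, ∨, →, ¬, ∘}`,
generated by a denumerable set of propositional variables. -/
inductive Form : Type
  | var : ℕ → Form
  | and : Form → Form → Form
  | or : Form → Form → Form
  | imp : Form → Form → Form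
  | neg : Form → Form
  | circ : Form → Form

/-- A valuation over the Nmatrix `M(S) = (S, D_S)` associated to a swap structure `S`,
where `D_S = {z ∈ dom S : z₁ = 1}`: a map `v` from formulas to the domain of `S` such
that the value of a compound formula belongs to the multioperation applied to the values
of its immediate subformulas. -/
structure IsSwapVal {A : Type u} [BooleanAlgebra A] (S : SwapStr A)
    (v : Form → A × A × A) : Prop where
  mem : ∀ φ, v φ ∈ S.dom
  vand : ∀ φ ψ, v (φ.and ψ) ∈ S.op .and ![v φ, v ψ]
  vor : ∀ φ ψ, v (φ.or ψ) ∈ S.op .or ![v φ, v ψ]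
  vimp : ∀ φ ψ, v (φ.imp ψ) ∈ S.op .imp ![v φ, v ψ]
  vneg : ∀ φ, v φ.neg ∈ S.op .neg ![v φ]
  vcirc : ∀ φ, v φ.circ ∈ S.op .circ ![v φ]

/-- Derivability in the Hilbert calculus CPL⁺ₑ (positive classical logic over the
signature `{∧, ∨, →, ¬, ∘}`, with no axioms or rules for `¬` and `∘`). -/
inductive CPLeDeriv : Set Form → Form → Prop
  | prem {Γ : Set Form} {φ : Form} : φ ∈ Γ → CPLeDeriv Γ φ
  | ax1 (Γ : Set Form) (α β : Form) : CPLeDeriv Γ (α.imp (β.imp α))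
  | ax2 (Γ : Set Form) (α β γ : Form) :
      CPLeDeriv Γ ((α.imp (β.imp γ)).imp ((α.imp β).imp (α.imp γ)))
  | ax3 (Γ : Set Form) (α β : Form) : CPLeDeriv Γ (α.imp (β.imp (α.and β)))
  | ax4 (Γ : Set Form) (α β : Form) : CPLeDeriv Γ ((α.and β).imp α)
  | ax5 (Γ : Set Form) (α β : Form) : CPLeDeriv Γ ((α.and β).imp β)
  | ax6 (Γ : Set Form) (α β : Form) : CPLeDeriv Γ (α.imp (α.or β))
  | ax7 (Γ : Set Form) (α β : Form) : CPLeDeriv Γ (β.imp (α.or β))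
  | ax8 (Γ : Set Form) (α β γ : Form) :
      CPLeDeriv Γ ((α.imp γ).imp ((β.imp γ).imp ((α.or β).imp γ)))
  | ax9 (Γ : Set Form) (α β : Form) : CPLeDeriv Γ ((α.imp β).or α)
  | mp {Γ : Set Form} {α β : Form} :
      CPLeDeriv Γ (α.imp β) → CPLeDeriv Γ α → CPLeDeriv Γ β

/-- Derivability in the Hilbert calculus mbC: CPL⁺ₑ plus
Ax10 `α ∨ ¬α` and bc1 `∘α → (α → (¬α → β))`. -/
inductive MbcDeriv : Set Form → Form → Prop
  | prem {Γ : Set Form} {φ : Form} : φ ∈ Γ → MbcDeriv Γ φ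
  | ax1 (Γ : Set Form) (α β : Form) : MbcDeriv Γ (α.imp (β.imp α))
  | ax2 (Γ : Set Form) (α β γ : Form) :
      MbcDeriv Γ ((α.imp (β.imp γ)).imp ((α.imp β).imp (α.imp γ)))
  | ax3 (Γ : Set Form) (α β : Form) : MbcDeriv Γ (α.imp (β.imp (α.and β)))
  | ax4 (Γ : Set Form) (α β : Form) : MbcDeriv Γ ((α.and β).imp α)
  | ax5 (Γ : Set Form) (α β : Form) : MbcDeriv Γ ((α.and β).imp β)
  | ax6 (Γ : Set Form) (α β : Form) : MbcDeriv Γ (α.imp (α.or β))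
  | ax7 (Γ : Set Form) (α β : Form) : MbcDeriv Γ (β.imp (α.or β))
  | ax8 (Γ : Set Form) (α β γ : Form) :
      MbcDeriv Γ ((α.imp γ).imp ((β.imp γ).imp ((α.or β).imp γ)))
  | ax9 (Γ : Set Form) (α β : Form) : MbcDeriv Γ ((α.imp β).or α)
  | ax10 (Γ : Set Form) (α : Form) : MbcDeriv Γ (α.or α.neg)
  | bc1 (Γ : Set Form) (α β : Form) : MbcDeriv Γ (α.circ.imp (α.imp (α.neg.imp β)))
  | mp {Γ : Set Form} {α β : Form} :
      MbcDeriv Γ (α.imp β) → MbcDeriv Γ α → MbcDeriv Γ β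

section Adequacy

/-- Monotonicity of derivability. -/
lemma CPLeDeriv.mono {Γ Γ' : Set Form} {φ : Form} (h : CPLeDeriv Γ φ) (hsub : Γ ⊆ Γ') :
    CPLeDeriv Γ' φ := by
  induction h with
  | @prem ψ hm => exact .prem (hsub hm)
  | ax1 α β => exact .ax1 _ α β
  | ax2 α β γ => exact .ax2 _ α β γ
  | ax3 α β => exact .ax3 _ α β
  | ax4 α β => exact .ax4 _ α β
  | ax5 α β => exact .ax5 _ α β
  | ax6 α β => exact .ax6 _ α β
  | ax7 α β => exact .ax7 _ α β
  | ax8 α β γ => exact .ax8 _ α β γ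
  | ax9 α β => exact .ax9 _ α β
  | mp _ _ ih1 ih2 => exact .mp ih1 ih2

/-- Compactness of derivability. -/
lemma CPLeDeriv.compact {Γ : Set Form} {φ : Form} (h : CPLeDeriv Γ φ) :
    ∃ Γ₀ : Set Form, Γ₀.Finite ∧ Γ₀ ⊆ Γ ∧ CPLeDeriv Γ₀ φ := by
  induction h with
  | @prem ψ hm =>
      exact ⟨{ψ}, Set.finite_singleton ψ, Set.singleton_subset_iff.mpr hm, .prem rfl⟩
  | ax1 α β => exact ⟨∅, Set.finite_empty, Set.empty_subset _, .ax1 _ α β⟩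
  | ax2 α β γ => exact ⟨∅, Set.finite_empty, Set.empty_subset _, .ax2 _ α β γ⟩
  | ax3 α β => exact ⟨∅, Set.finite_empty, Set.empty_subset _, .ax3 _ α β⟩
  | ax4 α β => exact ⟨∅, Set.finite_empty, Set.empty_subset _, .ax4 _ α β⟩
  | ax5 α β => exact ⟨∅, Set.finite_empty, Set.empty_subset _, .ax5 _ α β⟩
  | ax6 α β => exact ⟨∅, Set.finite_empty, Set.empty_subset _, .ax6 _ α β⟩
  | ax7 α β => exact ⟨∅, Set.finite_empty, Set.empty_subset _, .ax7 _ α β⟩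
  | ax8 α β γ => exact ⟨∅, Set.finite_empty, Set.empty_subset _, .ax8 _ α β γ⟩
  | ax9 α β => exact ⟨∅, Set.finite_empty, Set.empty_subset _, .ax9 _ α β⟩
  | mp _ _ ih1 ih2 =>
      obtain ⟨Γ₁, hf1, hs1, hd1⟩ := ih1
      obtain ⟨Γ₂, hf2, hs2, hd2⟩ := ih2
      exact ⟨Γ₁ ∪ Γ₂, hf1.union hf2, Set.union_subset hs1 hs2,
        .mp (hd1.mono Set.subset_union_left) (hd2.mono Set.subset_union_right)⟩

lemma CPLeDeriv.imp_self (Γ : Set Form) (α : Form) : CPLeDeriv Γ (α.imp α) :=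
  .mp (.mp (.ax2 Γ α (α.imp α) α) (.ax1 Γ α (α.imp α))) (.ax1 Γ α α)

/-- The deduction theorem for CPL⁺ₑ (auxiliary form). -/
lemma CPLeDeriv.deduction_aux {Δ : Set Form} {β : Form} (h : CPLeDeriv Δ β) :
    ∀ {Γ : Set Form} {α : Form}, Δ = insert α Γ → CPLeDeriv Γ (α.imp β) := by
  induction h with
  | @prem ψ hm =>
      intro Γ α hΔ
      subst hΔ
      rcases hm with hm | hm
      · exact hm ▸ CPLeDeriv.imp_self Γ α
      · exact .mp (.ax1 Γ ψ α) (.prem hm)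
  | ax1 a b => intro Γ α _; exact .mp (.ax1 Γ _ α) (.ax1 Γ a b)
  | ax2 a b c => intro Γ α _; exact .mp (.ax1 Γ _ α) (.ax2 Γ a b c)
  | ax3 a b => intro Γ α _; exact .mp (.ax1 Γ _ α) (.ax3 Γ a b)
  | ax4 a b => intro Γ α _; exact .mp (.ax1 Γ _ α) (.ax4 Γ a b)
  | ax5 a b => intro Γ α _; exact .mp (.ax1 Γ _ α) (.ax5 Γ a b)
  | ax6 a b => intro Γ α _; exact .mp (.ax1 Γ _ α) (.ax6 Γ a b)
  | ax7 a b => intro Γ α _; exact .mp (.ax1 Γ _ α) (.ax7 Γ a b)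
  | ax8 a b c => intro Γ α _; exact .mp (.ax1 Γ _ α) (.ax8 Γ a b c)
  | ax9 a b => intro Γ α _; exact .mp (.ax1 Γ _ α) (.ax9 Γ a b)
  | mp _ _ ih1 ih2 =>
      intro Γ α hΔ
      exact .mp (.mp (.ax2 Γ α _ _) (ih1 hΔ)) (ih2 hΔ)

/-- The deduction theorem for CPL⁺ₑ. -/
lemma CPLeDeriv.deduction {Γ : Set Form} {α β : Form}
    (h : CPLeDeriv (insert α Γ) β) : CPLeDeriv Γ (α.imp β) :=
  h.deduction_aux rfl

section Soundness

variable {A : Type u} [BooleanAlgebra A] {S : SwapStr A} {v : Form → A × A × A}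

private lemma pair_mem (h : IsSwapVal S v) (φ ψ : Form) :
    ∀ i, (![v φ, v ψ] : Fin 2 → A × A × A) i ∈ S.dom := by
  intro i; fin_cases i <;> simpa using h.mem _

lemma IsSwapVal.fst_and (h : IsSwapVal S v) (φ ψ : Form) :
    (v (φ.and ψ)).1 = (v φ).1 ⊓ (v ψ).1 := by
  simpa [swapTgt] using (S.op_sub .and ![v φ, v ψ] (pair_mem h φ ψ) (h.vand φ ψ)).2

lemma IsSwapVal.fst_or (h : IsSwapVal S v) (φ ψ : Form) :
    (v (φ.or ψ)).1 = (v φ).1 ⊔ (v ψ).1 := by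
  simpa [swapTgt] using (S.op_sub .or ![v φ, v ψ] (pair_mem h φ ψ) (h.vor φ ψ)).2

lemma IsSwapVal.fst_imp (h : IsSwapVal S v) (φ ψ : Form) :
    (v (φ.imp ψ)).1 = (v φ).1 ⇨ (v ψ).1 := by
  simpa [swapTgt] using (S.op_sub .imp ![v φ, v ψ] (pair_mem h φ ψ) (h.vimp φ ψ)).2

/-- Soundness of CPL⁺ₑ with respect to swap structures. -/
lemma cple_sound {Γ : Set Form} {φ : Form} (h : CPLeDeriv Γ φ)
    (hv : IsSwapVal S v) (hΓ : ∀ γ ∈ Γ, (v γ).1 = ⊤) : (v φ).1 = ⊤ := by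
  induction h with
  | @prem ψ hm => exact hΓ _ hm
  | ax1 α β =>
      simp only [hv.fst_imp]
      rw [eq_top_iff]
      simp [le_himp_iff]
  | ax2 α β γ =>
      simp only [hv.fst_imp]
      rw [eq_top_iff]
      simp only [le_himp_iff, top_inf_eq]
      set a := (v α).1; set b := (v β).1; set c := (v γ).1
      calc (a ⇨ b ⇨ c) ⊓ (a ⇨ b) ⊓ a = ((a ⇨ b ⇨ c) ⊓ a) ⊓ ((a ⇨ b) ⊓ a) := by
            rw [inf_inf_distrib_right]
        _ ≤ (b ⇨ c) ⊓ b := inf_le_inf himp_inf_le himp_inf_le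
        _ ≤ c := himp_inf_le
  | ax3 α β =>
      simp only [hv.fst_imp, hv.fst_and]
      rw [eq_top_iff]
      simp [le_himp_iff, inf_comm]
  | ax4 α β => simp only [hv.fst_imp, hv.fst_and]; simp
  | ax5 α β => simp only [hv.fst_imp, hv.fst_and]; simp
  | ax6 α β => simp only [hv.fst_imp, hv.fst_or]; simp
  | ax7 α β => simp only [hv.fst_imp, hv.fst_or]; simp
  | ax8 α β γ =>
      simp only [hv.fst_imp, hv.fst_or]
      rw [eq_top_iff]
      simp only [le_himp_iff, top_inf_eq]
      set a := (v α).1; set b := (v β).1; set c := (v γ).1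
      rw [inf_sup_left]
      apply sup_le
      · calc (a ⇨ c) ⊓ (b ⇨ c) ⊓ a ≤ (a ⇨ c) ⊓ a := inf_le_inf inf_le_left le_rfl
          _ ≤ c := himp_inf_le
      · calc (a ⇨ c) ⊓ (b ⇨ c) ⊓ b ≤ (b ⇨ c) ⊓ b := inf_le_inf inf_le_right le_rfl
          _ ≤ c := himp_inf_le
  | ax9 α β =>
      simp only [hv.fst_or, hv.fst_imp]
      rw [himp_eq, sup_assoc]; simp
  | @mp α β _ _ ih1 ih2 =>
      have h' : (v α).1 ⇨ (v β).1 = ⊤ := (hv.fst_imp α β).symm.trans ih1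
      have hle : (v α).1 ≤ (v β).1 := himp_eq_top_iff.mp h'
      rw [ih2] at hle
      exact top_unique hle

end Soundness

/-- Any finite subset of the union of a nonempty chain of sets is contained
in some member of the chain. -/
lemma finite_subset_chain {c : Set (Set Form)} (hchain : IsChain (· ⊆ ·) c)
    (hne : c.Nonempty) {F : Set Form} (hF : F.Finite) :
    F ⊆ ⋃₀ c → ∃ s ∈ c, F ⊆ s := by
  refine Set.Finite.induction_on (motive := fun F _ => F ⊆ ⋃₀ c → ∃ s ∈ c, F ⊆ s) F hF ?_ ?_
  · intro _
    exact ⟨hne.choose, hne.choose_spec, Set.empty_subset _⟩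
  · intro a F ha hfin ih hsub
    obtain ⟨s, hs, hFs⟩ := ih (fun x hx => hsub (Set.mem_insert_of_mem _ hx))
    obtain ⟨t, ht, hat⟩ := hsub (Set.mem_insert _ _)
    rcases hchain.total hs ht with hle | hle
    · exact ⟨t, ht, Set.insert_subset hat (hFs.trans hle)⟩
    · exact ⟨s, hs, Set.insert_subset (hle hat) hFs⟩

/-- Lindenbaum–Łoś-style maximal extension. -/
lemma cple_lindenbaum {Γ : Set Form} {φ : Form} (h : ¬ CPLeDeriv Γ φ) :
    ∃ Δ : Set Form, Γ ⊆ Δ ∧ ¬ CPLeDeriv Δ φ ∧ ∀ ψ, ψ ∉ Δ → CPLeDeriv (insert ψ Δ) φ := by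
  set S : Set (Set Form) := {Δ | Γ ⊆ Δ ∧ ¬ CPLeDeriv Δ φ} with hS
  have hzorn : ∀ c ⊆ S, IsChain (· ⊆ ·) c → c.Nonempty → ∃ ub ∈ S, ∀ s ∈ c, s ⊆ ub := by
    intro c hcS hchain hcne
    refine ⟨⋃₀ c, ⟨?_, ?_⟩, fun s hs => Set.subset_sUnion_of_mem hs⟩
    · obtain ⟨s, hs⟩ := hcne
      exact (hcS hs).1.trans (Set.subset_sUnion_of_mem hs)
    · intro hder
      obtain ⟨F, hFfin, hFsub, hFd⟩ := hder.compact
      obtain ⟨s, hs, hFs⟩ := finite_subset_chain hchain hcne hFfin hFsub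
      exact (hcS hs).2 (hFd.mono hFs)
  obtain ⟨Δ, hsub, hmax⟩ := zorn_subset_nonempty S hzorn Γ ⟨subset_rfl, h⟩
  refine ⟨Δ, hmax.prop.1, hmax.prop.2, fun ψ hψ => ?_⟩
  by_contra hd
  have hmem : insert ψ Δ ∈ S := ⟨hmax.prop.1.trans (Set.subset_insert _ _), hd⟩
  exact hψ (hmax.2 hmem (Set.subset_insert ψ Δ) (Set.mem_insert ψ Δ))

theorem cple_adequacy (Γ : Set Form) (φ : Form) :
    CPLeDeriv Γ φ ↔
      ∀ (A : Type u) [BooleanAlgebra A] (S : SwapStr A) (v : Form → A × A × A),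
        IsSwapVal S v → (∀ γ ∈ Γ, (v γ).1 = ⊤) → (v φ).1 = ⊤ := by
  constructor
  · intro h A _ S v hv hΓ
    exact cple_sound h hv hΓ
  · intro h
    by_contra hnd
    obtain ⟨Δ, hΓΔ, hΔnd, hmax⟩ := cple_lindenbaum hnd
    -- closure properties of the maximal set
    have closed : ∀ ψ, CPLeDeriv Δ ψ → ψ ∈ Δ := by
      intro ψ hψd
      by_contra hn
      exact hΔnd (.mp (CPLeDeriv.deduction (hmax ψ hn)) hψd)
    have prime : ∀ ψ χ, ψ.or χ ∈ Δ → ψ ∈ Δ ∨ χ ∈ Δ := by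
      intro ψ χ hm
      by_contra hn
      push_neg at hn
      have h1 := CPLeDeriv.deduction (hmax ψ hn.1)
      have h2 := CPLeDeriv.deduction (hmax χ hn.2)
      exact hΔnd (.mp (.mp (.mp (.ax8 Δ ψ χ φ) h1) h2) (.prem hm))
    have and_mem : ∀ ψ χ : Form, ψ.and χ ∈ Δ ↔ (ψ ∈ Δ ∧ χ ∈ Δ) := by
      intro ψ χ
      constructor
      · intro hm
        exact ⟨closed _ (.mp (.ax4 Δ ψ χ) (.prem hm)), closed _ (.mp (.ax5 Δ ψ χ) (.prem hm))⟩
      · rintro ⟨h1, h2⟩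
        exact closed _ (.mp (.mp (.ax3 Δ ψ χ) (.prem h1)) (.prem h2))
    have or_mem : ∀ ψ χ : Form, ψ.or χ ∈ Δ ↔ (ψ ∈ Δ ∨ χ ∈ Δ) := by
      intro ψ χ
      constructor
      · exact prime ψ χ
      · rintro (h1 | h1)
        · exact closed _ (.mp (.ax6 Δ ψ χ) (.prem h1))
        · exact closed _ (.mp (.ax7 Δ ψ χ) (.prem h1))
    have imp_mem : ∀ ψ χ : Form, ψ.imp χ ∈ Δ ↔ (ψ ∈ Δ → χ ∈ Δ) := by
      intro ψ χ
      constructor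
      · intro hm hψ
        exact closed _ (.mp (.prem hm) (.prem hψ))
      · intro himp
        rcases prime _ _ (closed _ (.ax9 Δ ψ χ)) with h1 | h1
        · exact h1
        · exact closed _ (.mp (.ax1 Δ χ ψ) (.prem (himp h1)))
    -- the canonical valuation over the full swap structure on Set PUnit
    set t : Form → Set PUnit.{u + 1} := fun ψ => {_x | ψ ∈ Δ} with ht
    set v : Form → (Set PUnit.{u + 1}) × (Set PUnit.{u + 1}) × (Set PUnit.{u + 1}) :=
      fun ψ => (t ψ, t ψ.neg, t ψ.circ) with hv
    have htop : ∀ ψ, t ψ = ⊤ ↔ ψ ∈ Δ := by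
      intro ψ
      simp [ht, Set.eq_univ_iff_forall, Set.top_eq_univ]
    have hval : IsSwapVal (fullCPLe (Set PUnit.{u + 1})) v := by
      refine ⟨fun _ => Set.mem_univ _, ?_, ?_, ?_, ?_, ?_⟩
      · intro ψ χ
        show (v (ψ.and χ)).1 = swapTgt .and ![v ψ, v χ]
        simp only [swapTgt, Matrix.cons_val_zero, Matrix.cons_val_one, Matrix.head_cons, hv]
        ext x
        simp [ht, and_mem ψ χ]
      · intro ψ χ
        show (v (ψ.or χ)).1 = swapTgt .or ![v ψ, v χ]
        simp only [swapTgt, Matrix.cons_val_zero, Matrix.cons_val_one, Matrix.head_cons, hv]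
        ext x
        simp [ht, or_mem ψ χ]
      · intro ψ χ
        show (v (ψ.imp χ)).1 = swapTgt .imp ![v ψ, v χ]
        simp only [swapTgt, Matrix.cons_val_zero, Matrix.cons_val_one, Matrix.head_cons, hv]
        rw [himp_eq]
        ext x
        simp only [ht, Set.mem_setOf_eq, Set.sup_eq_union, Set.mem_union, Set.mem_compl_iff]
        rw [imp_mem ψ χ]
        constructor
        · intro hm
          by_cases hψ : ψ ∈ Δ
          · exact Or.inl (hm hψ)
          · exact Or.inr hψ
        · rintro (hm | hm) hψ
          · exact hm
          · exact absurd hψ hm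
      · intro ψ
        show (v ψ.neg).1 = swapTgt .neg ![v ψ]
        simp [swapTgt, hv]
      · intro ψ
        show (v ψ.circ).1 = swapTgt .circ ![v ψ]
        simp [swapTgt, hv]
    have hfin := h (Set PUnit.{u + 1}) (fullCPLe _) v hval
      (fun γ hγ => (htop γ).mpr (hΓΔ hγ))
    exact hΔnd (.prem ((htop φ).mp hfin))
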